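/- Let R = R₁ ×_k R₂ be the pullback of two discrete valuation rings R₁, R₂ (with maximal ideals P₁ = R₁p₁, P₂ = R₂p₂) over their common residue field k. Then the ideals {0}, 0 ⊕ P₂^m, P₁^n ⊕ 0, and P₁^n ⊕ P₂^m of R are 2-absorbing primary ideals for all m, n ≥ 1. -/

import Mathlib

/-- A proper ideal `I` is 2-absorbing primary if `a*b*c ∈ I` implies
`a*b ∈ I` or `a*c ∈ √I` or `b*c ∈ √I`. -/
def IsTwoAbsPrimary {R : Type*} [CommRing R] (I : Ideal R) : Prop :=
  I ≠ ⊤ ∧ ∀ a b c : R, a * b * c ∈ I → a * b ∈ I ∨ a * c ∈ I.radical ∨ b * c ∈ I.radical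

/-- A proper submodule `N` of `M` is pseudo-absorbing primary if `(N :_R M)`
is a 2-absorbing primary ideal of `R`. -/
def IsPseudoAbsPrimary {R M : Type*} [CommRing R] [AddCommGroup M] [Module R M]
    (N : Submodule R M) : Prop :=
  N ≠ ⊤ ∧ IsTwoAbsPrimary (N.colon ⊤)

/-- `M` is a pseudo-absorbing primary multiplication module if every
pseudo-absorbing primary submodule `N` satisfies `N = I • M` for some ideal `I`. -/
def IsPAPMultiplication (R M : Type*) [CommRing R] [AddCommGroup M] [Module R M] : Prop :=
  ∀ N : Submodule R M, IsPseudoAbsPrimary N → ∃ I : Ideal R, N = I • (⊤ : Submodule R M)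

/-- The pullback ring `R = {(r,s) : v₁ r = v₂ s}` of two rings over a common quotient. -/
def pullbackRing {R₁ R₂ k : Type*} [CommRing R₁] [CommRing R₂] [CommRing k]
    (v₁ : R₁ →+* k) (v₂ : R₂ →+* k) : Subring (R₁ × R₂) :=
  RingHom.eqLocus (v₁.comp (RingHom.fst R₁ R₂)) (v₂.comp (RingHom.snd R₁ R₂))

/-- The ideal `I ⊕ J` of the pullback ring, i.e. the trace on the pullback of the
product ideal `I × J` of `R₁ × R₂`. -/
def pbIdeal {R₁ R₂ k : Type*} [CommRing R₁] [CommRing R₂] [CommRing k]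
    (v₁ : R₁ →+* k) (v₂ : R₂ →+* k) (I : Ideal R₁) (J : Ideal R₂) :
    Ideal (pullbackRing v₁ v₂) :=
  Ideal.comap (pullbackRing v₁ v₂).subtype (I.prod J)

section Aux

variable {R₁ R₂ k : Type*} [CommRing R₁] [CommRing R₂] [CommRing k]
    (v₁ : R₁ →+* k) (v₂ : R₂ →+* k)

lemma twoAbs_of_radical_prime {R : Type*} [CommRing R] {I : Ideal R}
    (hne : I ≠ ⊤) (hp : I.radical.IsPrime) : IsTwoAbsPrimary I := by
  refine ⟨hne, fun a b c habc => ?_⟩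
  have h : a * b * c ∈ I.radical := Ideal.le_radical habc
  rcases hp.mem_or_mem h with hab | hc
  · rcases hp.mem_or_mem hab with ha | hb
    · exact Or.inr (Or.inl (Ideal.mul_mem_right _ _ ha))
    · exact Or.inr (Or.inr (Ideal.mul_mem_right _ _ hb))
  · exact Or.inr (Or.inl (Ideal.mul_mem_left _ _ hc))

lemma mem_pbIdeal {I : Ideal R₁} {J : Ideal R₂} {x : pullbackRing v₁ v₂} :
    x ∈ pbIdeal v₁ v₂ I J ↔ (x : R₁ × R₂).1 ∈ I ∧ (x : R₁ × R₂).2 ∈ J := by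
  rw [pbIdeal, Ideal.mem_comap]
  have := @Ideal.mem_prod R₁ R₂ _ _ I J (x : R₁ × R₂)
  simpa using this

lemma radical_pbIdeal {I : Ideal R₁} {J : Ideal R₂} :
    (pbIdeal v₁ v₂ I J).radical = pbIdeal v₁ v₂ I.radical J.radical := by
  ext x
  simp only [Ideal.mem_radical_iff, mem_pbIdeal]
  constructor
  · rintro ⟨n, h1, h2⟩
    constructor
    · exact ⟨n, by simpa using h1⟩
    · exact ⟨n, by simpa using h2⟩
  · rintro ⟨⟨n, h1⟩, ⟨m, h2⟩⟩
    refine ⟨n + m, ?_, ?_⟩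
    · show ((x : R₁ × R₂) ^ (n + m)).1 ∈ I
      rw [Prod.pow_fst, pow_add]
      exact Ideal.mul_mem_right _ _ h1
    · show ((x : R₁ × R₂) ^ (n + m)).2 ∈ J
      rw [Prod.pow_snd, pow_add]
      exact Ideal.mul_mem_left _ _ h2

end Aux

theorem stmt_11 {R₁ R₂ k : Type*} [CommRing R₁] [CommRing R₂] [Field k]
    [IsDomain R₁] [IsDomain R₂] [IsDiscreteValuationRing R₁] [IsDiscreteValuationRing R₂]
    (v₁ : R₁ →+* k) (v₂ : R₂ →+* k)
    (hv₁ : Function.Surjective v₁) (hv₂ : Function.Surjective v₂)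
    (hk₁ : RingHom.ker v₁ = IsLocalRing.maximalIdeal R₁)
    (hk₂ : RingHom.ker v₂ = IsLocalRing.maximalIdeal R₂) :
    IsTwoAbsPrimary (⊥ : Ideal (pullbackRing v₁ v₂)) ∧
    ∀ m n : ℕ, 1 ≤ m → 1 ≤ n →
      IsTwoAbsPrimary (pbIdeal v₁ v₂ ⊥ (IsLocalRing.maximalIdeal R₂ ^ m)) ∧
      IsTwoAbsPrimary (pbIdeal v₁ v₂ (IsLocalRing.maximalIdeal R₁ ^ n) ⊥) ∧
      IsTwoAbsPrimary (pbIdeal v₁ v₂ (IsLocalRing.maximalIdeal R₁ ^ n)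
        (IsLocalRing.maximalIdeal R₂ ^ m)) := by
  set P₁ := IsLocalRing.maximalIdeal R₁ with hP₁
  set P₂ := IsLocalRing.maximalIdeal R₂ with hP₂
  have coe_mul : ∀ x y : pullbackRing v₁ v₂, ((x * y : pullbackRing v₁ v₂) : R₁ × R₂)
      = (x : R₁ × R₂) * (y : R₁ × R₂) := fun _ _ => rfl
  have hmem₁ : ∀ x : pullbackRing v₁ v₂, v₁ (x : R₁ × R₂).1 = v₂ (x : R₁ × R₂).2 :=
    fun x => x.2
  -- 0 ⊕ P₂ is prime
  have hprime₁ : (pbIdeal v₁ v₂ (⊥ : Ideal R₁) P₂).IsPrime := by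
    constructor
    · intro h
      have := (Ideal.eq_top_iff_one _).mp h
      rw [mem_pbIdeal] at this
      exact (one_ne_zero : (1 : R₁) ≠ 0) (by simpa using this.1)
    · intro x y hxy
      rw [mem_pbIdeal] at hxy ⊢
      rw [mem_pbIdeal]
      obtain ⟨h1, h2⟩ := hxy
      simp only [coe_mul, Prod.fst_mul, Prod.snd_mul, Ideal.mem_bot] at h1 h2 ⊢
      rcases mul_eq_zero.mp h1 with h | h
      · left
        refine ⟨h, ?_⟩
        have hv : v₂ (x : R₁ × R₂).2 = 0 := by rw [← hmem₁ x, h, map_zero]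
        rw [← hk₂]; exact hv
      · right
        refine ⟨h, ?_⟩
        have hv : v₂ (y : R₁ × R₂).2 = 0 := by rw [← hmem₁ y, h, map_zero]
        rw [← hk₂]; exact hv
  -- P₁ ⊕ 0 is prime
  have hprime₂ : (pbIdeal v₁ v₂ P₁ (⊥ : Ideal R₂)).IsPrime := by
    constructor
    · intro h
      have := (Ideal.eq_top_iff_one _).mp h
      rw [mem_pbIdeal] at this
      exact (one_ne_zero : (1 : R₂) ≠ 0) (by simpa using this.2)
    · intro x y hxy
      rw [mem_pbIdeal] at hxy ⊢
      rw [mem_pbIdeal]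
      obtain ⟨h1, h2⟩ := hxy
      simp only [coe_mul, Prod.fst_mul, Prod.snd_mul, Ideal.mem_bot] at h1 h2 ⊢
      rcases mul_eq_zero.mp h2 with h | h
      · left
        refine ⟨?_, h⟩
        have hv : v₁ (x : R₁ × R₂).1 = 0 := by rw [hmem₁ x, h, map_zero]
        rw [← hk₁]; exact hv
      · right
        refine ⟨?_, h⟩
        have hv : v₁ (y : R₁ × R₂).1 = 0 := by rw [hmem₁ y, h, map_zero]
        rw [← hk₁]; exact hv
  -- P₁ ⊕ P₂ is prime
  have hP1ne : P₁ ≠ ⊤ := (IsLocalRing.maximalIdeal.isMaximal R₁).ne_top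
  have hP1pr : P₁.IsPrime := (IsLocalRing.maximalIdeal.isMaximal R₁).isPrime
  have hP2pr : P₂.IsPrime := (IsLocalRing.maximalIdeal.isMaximal R₂).isPrime
  have hprime₃ : (pbIdeal v₁ v₂ P₁ P₂).IsPrime := by
    constructor
    · intro h
      have h' := (Ideal.eq_top_iff_one _).mp h
      rw [mem_pbIdeal] at h'
      exact hP1ne ((Ideal.eq_top_iff_one _).mpr h'.1)
    · intro x y hxy
      rw [mem_pbIdeal] at hxy ⊢
      rw [mem_pbIdeal]
      obtain ⟨h1, h2⟩ := hxy
      simp only [coe_mul, Prod.fst_mul, Prod.snd_mul] at h1 h2 ⊢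
      have e1 : ∀ z : pullbackRing v₁ v₂,
          (z : R₁ × R₂).1 ∈ P₁ ↔ (z : R₁ × R₂).2 ∈ P₂ := by
        intro z
        rw [← hk₁, ← hk₂, RingHom.mem_ker, RingHom.mem_ker, hmem₁ z]
      rcases hP1pr.mem_or_mem h1 with h | h
      · exact Or.inl ⟨h, (e1 x).mp h⟩
      · exact Or.inr ⟨h, (e1 y).mp h⟩
  have hradpow₂ : ∀ m : ℕ, 1 ≤ m → (P₂ ^ m).radical = P₂ := by
    intro m hm
    rw [Ideal.radical_pow P₂ (Nat.one_le_iff_ne_zero.mp hm)]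
    exact hP2pr.radical
  have hradpow₁ : ∀ n : ℕ, 1 ≤ n → (P₁ ^ n).radical = P₁ := by
    intro n hn
    rw [Ideal.radical_pow P₁ (Nat.one_le_iff_ne_zero.mp hn)]
    exact hP1pr.radical
  constructor
  · -- the zero ideal
    refine ⟨?_, ?_⟩
    · intro h
      have h' := (Ideal.eq_top_iff_one _).mp h
      rw [Ideal.mem_bot] at h'
      have : ((1 : pullbackRing v₁ v₂) : R₁ × R₂) = 0 := by rw [h']; rfl
      exact (one_ne_zero : (1 : R₁) ≠ 0) (congrArg Prod.fst this)
    · intro a b c habc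
      rw [Ideal.mem_bot] at habc
      have h0 : ((a : R₁ × R₂) * b * c) = 0 := by
        rw [← coe_mul, ← coe_mul, habc]; rfl
      have h1 : (a : R₁ × R₂).1 * (b : R₁ × R₂).1 * (c : R₁ × R₂).1 = 0 := by
        have := congrArg Prod.fst h0; simpa using this
      have h2 : (a : R₁ × R₂).2 * (b : R₁ × R₂).2 * (c : R₁ × R₂).2 = 0 := by
        have := congrArg Prod.snd h0; simpa using this
      have key : ∀ u w : pullbackRing v₁ v₂, (u : R₁ × R₂).1 = 0 → (w : R₁ × R₂).2 = 0 →
          u * w ∈ (⊥ : Ideal (pullbackRing v₁ v₂)) := by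
        intro u w hu hw
        rw [Ideal.mem_bot]
        apply Subtype.ext
        rw [coe_mul]
        apply Prod.ext
        · simp [hu]
        · simp [hw]
      have key' : ∀ u w : pullbackRing v₁ v₂, (u : R₁ × R₂).1 = 0 → (w : R₁ × R₂).2 = 0 →
          w * u ∈ (⊥ : Ideal (pullbackRing v₁ v₂)) := by
        intro u w hu hw; rw [mul_comm]; exact key u w hu hw
      have zmem : ∀ u : pullbackRing v₁ v₂, (u : R₁ × R₂).1 = 0 → (u : R₁ × R₂).2 = 0 →
          u = 0 := fun u hu1 hu2 => Subtype.ext (Prod.ext hu1 hu2)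
      rcases mul_eq_zero.mp h1 with hab1 | hc1
      · rcases mul_eq_zero.mp hab1 with ha1 | hb1
        · rcases mul_eq_zero.mp h2 with hab2 | hc2
          · rcases mul_eq_zero.mp hab2 with ha2 | hb2
            · left
              rw [Ideal.mem_bot, zmem a ha1 ha2, zero_mul]
            · exact Or.inl (key a b ha1 hb2)
          · exact Or.inr (Or.inl (Ideal.le_radical (key a c ha1 hc2)))
        · rcases mul_eq_zero.mp h2 with hab2 | hc2
          · rcases mul_eq_zero.mp hab2 with ha2 | hb2
            · exact Or.inl (key' b a hb1 ha2)
            · left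
              rw [Ideal.mem_bot, zmem b hb1 hb2, mul_zero]
          · exact Or.inr (Or.inr (Ideal.le_radical (key b c hb1 hc2)))
      · rcases mul_eq_zero.mp h2 with hab2 | hc2
        · rcases mul_eq_zero.mp hab2 with ha2 | hb2
          · exact Or.inr (Or.inl (Ideal.le_radical (key' c a hc1 ha2)))
          · exact Or.inr (Or.inr (Ideal.le_radical (key' c b hc1 hb2)))
        · refine Or.inr (Or.inl (Ideal.le_radical ?_))
          rw [Ideal.mem_bot, zmem c hc1 hc2, mul_zero]
  · intro m n hm hn
    refine ⟨?_, ?_, ?_⟩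
    · apply twoAbs_of_radical_prime
      · intro h
        have h' := (Ideal.eq_top_iff_one _).mp h
        rw [mem_pbIdeal] at h'
        exact (one_ne_zero : (1 : R₁) ≠ 0) (by simpa using h'.1)
      · rw [radical_pbIdeal, Ideal.radical_bot_of_noZeroDivisors, hradpow₂ m hm]
        exact hprime₁
    · apply twoAbs_of_radical_prime
      · intro h
        have h' := (Ideal.eq_top_iff_one _).mp h
        rw [mem_pbIdeal] at h'
        exact (one_ne_zero : (1 : R₂) ≠ 0) (by simpa using h'.2)
      · rw [radical_pbIdeal, Ideal.radical_bot_of_noZeroDivisors, hradpow₁ n hn]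
        exact hprime₂
    · apply twoAbs_of_radical_prime
      · intro h
        have h' := (Ideal.eq_top_iff_one _).mp h
        rw [mem_pbIdeal] at h'
        have h1 : (1 : R₁) ∈ P₁ := Ideal.pow_le_self (Nat.one_le_iff_ne_zero.mp hn) h'.1
        exact hP1ne ((Ideal.eq_top_iff_one _).mpr h1)
      · rw [radical_pbIdeal, hradpow₁ n hn, hradpow₂ m hm]
        exact hprime₃
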